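/- Let n ≥ 2 be an integer and T = PSL(2, 2^{2n}) (= SL(2, 2^{2n})). Let Y = Y₂ ⋊ Y₁ ≤ T be a Borel subgroup, where Y₂ ≅ C₂^{2n} is elementary abelian and Y₁ = ⟨y₁⟩ is cyclic of order 2^{2n} − 1 acting regularly on the nonidentity elements of Y₂. Let Y₀ ≤ Y with Y₀ ≅ A₄ containing the subgroup Y₃ = ⟨y₁^{(2^{2n}−1)/3}⟩ of order 3 of Y₁. Then N_T(Y₀) = Y₀. -/

import Mathlib

open MulAction Pointwise
open scoped MatrixGroups

/-- An `s`-arc in a graph: a sequence of `s+1` vertices in which consecutive vertices are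
adjacent and `αᵢ ≠ αᵢ₊₂` for all `i`. -/
def SimpleGraph.IsNArc {V : Type*} (Γ : SimpleGraph V) (s : ℕ) (p : Fin (s + 1) → V) : Prop :=
  (∀ i : Fin s, Γ.Adj (p i.castSucc) (p i.succ)) ∧
    ∀ (i : ℕ) (h : i + 2 ≤ s), p ⟨i, by omega⟩ ≠ p ⟨i + 2, by omega⟩

/-- A group `G` acting on the vertices of `Γ` acts by graph automorphisms. -/
def ActsOn {V : Type*} (Γ : SimpleGraph V) (G : Type*) [Group G] [MulAction G V] : Prop :=
  ∀ (g : G) (u v : V), Γ.Adj u v → Γ.Adj (g • u) (g • v)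

/-- `Γ` is locally `(G,s)`-arc-transitive: for each vertex `α`, the stabiliser `G_α` is
transitive on the `s`-arcs starting at `α`; equivalently any two `s`-arcs with the same
initial vertex are related by an element of `G` (which then necessarily fixes that vertex). -/
def LocallyArcTrans {V : Type*} (Γ : SimpleGraph V) (G : Type*) [Group G] [MulAction G V]
    (s : ℕ) : Prop :=
  ∀ p q : Fin (s + 1) → V, Γ.IsNArc s p → Γ.IsNArc s q → p 0 = q 0 →
    ∃ g : G, ∀ i, g • p i = q i

/-- `G` is quasiprimitive on `Ω`: it is transitive and all nontrivial normal subgroups are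
transitive. -/
def IsQuasiprimitive (G Ω : Type*) [Group G] [MulAction G Ω] : Prop :=
  IsPretransitive G Ω ∧ ∀ N : Subgroup G, N.Normal → N ≠ ⊥ → IsPretransitive N Ω

/-- `G` is primitive on `Ω`: transitive and every block is trivial. -/
def IsPrimitiveAction (G Ω : Type*) [Group G] [MulAction G Ω] : Prop :=
  IsPretransitive G Ω ∧ ∀ B : Set Ω, IsBlock G B → B.Subsingleton ∨ B = Set.univ

/-- 2-transitivity of an action. -/
def IsTwoTrans (G X : Type*) [Group G] [MulAction G X] : Prop :=
  ∀ a b c d : X, a ≠ b → c ≠ d → ∃ g : G, g • a = c ∧ g • b = d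

/-- `G` is transitive on the edges of `Γ`. -/
def EdgeTransitive {V : Type*} (Γ : SimpleGraph V) (G : Type*) [Group G] [MulAction G V] : Prop :=
  ∀ a b c d : V, Γ.Adj a b → Γ.Adj c d →
    ∃ g : G, (g • a = c ∧ g • b = d) ∨ (g • a = d ∧ g • b = c)

/-- The coset graph `Cos(G, L, R)`: a bipartite graph on `[G:L] ⊔ [G:R]`, where two cosets
are adjacent iff they intersect nontrivially. -/
def CosetGraph (G : Type*) [Group G] (L R : Subgroup G) : SimpleGraph ((G ⧸ L) ⊕ (G ⧸ R)) where
  Adj a b :=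
    (∃ g : G, a = Sum.inl (g : G ⧸ L) ∧ b = Sum.inr (g : G ⧸ R)) ∨
      (∃ g : G, a = Sum.inr (g : G ⧸ R) ∧ b = Sum.inl (g : G ⧸ L))
  symm := by
    refine ⟨?_⟩
    rintro a b (⟨g, h1, h2⟩ | ⟨g, h1, h2⟩)
    · exact Or.inr ⟨g, h2, h1⟩
    · exact Or.inl ⟨g, h2, h1⟩
  loopless := by
    refine ⟨?_⟩
    rintro a (⟨g, h1, h2⟩ | ⟨g, h1, h2⟩) <;> rw [h1] at h2 <;> simp at h2

/-- `G` acts on the vertex set of a coset graph (on both coset spaces simultaneously),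
by (left) multiplication. -/
instance sumMulAction {G α β : Type*} [Monoid G] [MulAction G α] [MulAction G β] :
    MulAction G (α ⊕ β) where
  smul g := Sum.map (g • ·) (g • ·)
  one_smul x := by
    cases x with
    | inl a => show Sum.inl ((1 : G) • a) = Sum.inl a; rw [one_smul]
    | inr a => show Sum.inr ((1 : G) • a) = Sum.inr a; rw [one_smul]
  mul_smul g h x := by
    cases x with
    | inl a => show Sum.inl ((g * h) • a) = Sum.inl (g • h • a); rw [mul_smul]
    | inr a => show Sum.inr ((g * h) • a) = Sum.inr (g • h • a); rw [mul_smul]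

/-- The amalgams `(A, B, A ⊓ B)` and `(C, D, C ⊓ D)` are isomorphic: there are isomorphisms
`A ≅ C` and `B ≅ D` that agree on `A ⊓ B` and map `A ⊓ B` onto `C ⊓ D`. -/
def AmalgamIso {G₁ G₂ : Type*} [Group G₁] [Group G₂] (A B : Subgroup G₁)
    (C D : Subgroup G₂) : Prop :=
  ∃ (φ : ↥A ≃* ↥C) (ψ : ↥B ≃* ↥D),
    (∀ (x : G₁) (hA : x ∈ A) (hB : x ∈ B), ((φ ⟨x, hA⟩ : G₂) = (ψ ⟨x, hB⟩ : G₂))) ∧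
    (∀ (x : G₁) (hA : x ∈ A), x ∈ B ↔ (φ ⟨x, hA⟩ : G₂) ∈ D) ∧
    (∀ (x : G₁) (hB : x ∈ B), x ∈ A ↔ (ψ ⟨x, hB⟩ : G₂) ∈ C)

/-- Data witnessing that a quasiprimitive action of `G` on `Ω` has type PA:
a `G`-invariant partition `𝓑` of `Ω` (the fibres of `π`), on which `G` acts faithfully
(via `ρ`), identified with `Δ^k` (`k ≥ 2`) in such a way that `G ≤ H Wr S_k` in product
action, where `H ≤ Sym(Δ)` is almost simple (with socle `T`) and quasiprimitive on `Δ`.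
Moreover `N = T^k` is the unique minimal normal subgroup of `G`. -/
structure PAStructure (G : Type*) [Group G] (Ω : Type*) [MulAction G Ω] where
  /-- the ingredient set `Δ` of the product structure -/
  Δ : Type
  /-- the number of factors -/
  k : ℕ
  two_le_k : 2 ≤ k
  quasiprimitive : IsQuasiprimitive G Ω
  /-- the map sending a point to its block, with blocks identified with `Δ^k` -/
  π : Ω → Fin k → Δ
  π_surj : Function.Surjective π
  /-- the action of `G` on the set of blocks `Δ^k` -/
  ρ : G →* Equiv.Perm (Fin k → Δ)
  ρ_faithful : Function.Injective ρ
  compat : ∀ (g : G) (x : Ω), π (g • x) = ρ g (π x)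
  /-- the almost simple group `H ≤ Sym(Δ)` -/
  H : Subgroup (Equiv.Perm Δ)
  H_quasiprimitive : IsQuasiprimitive ↥H Δ
  /-- `G ≤ H Wr S_k` in product action -/
  wreath : ∀ g : G, ∃ (h : Fin k → Equiv.Perm Δ) (σ : Equiv.Perm (Fin k)),
    (∀ i, h i ∈ H) ∧ ∀ (f : Fin k → Δ) (i : Fin k), ρ g f i = h i (f (σ⁻¹ i))
  /-- the socle `T` of `H` -/
  T : Subgroup (Equiv.Perm Δ)
  T_le : T ≤ H
  T_simple : IsSimpleGroup ↥T
  T_nonabelian : ∃ a b : ↥T, a * b ≠ b * a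
  T_normal : ∀ h ∈ H, ∀ t ∈ T, h * t * h⁻¹ ∈ T
  T_centralizer : ∀ h ∈ H, (∀ t ∈ T, h * t = t * h) → h = 1
  /-- the unique minimal normal subgroup `N = T^k` of `G` -/
  N : Subgroup G
  N_normal : N.Normal
  N_ne_bot : N ≠ ⊥
  N_mem : ∀ g : G, g ∈ N ↔ ∃ t : Fin k → Equiv.Perm Δ, (∀ i, t i ∈ T) ∧
    ∀ (f : Fin k → Δ) (i : Fin k), ρ g f i = t i (f i)
  N_min : ∀ M : Subgroup G, M.Normal → M ≠ ⊥ → N ≤ M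

namespace PAStructure

variable {G : Type*} [Group G] {Ω : Type*} [MulAction G Ω]

/-- The point stabiliser `N_α` is the straight diagonal subgroup
`{(t,…,t) : t ∈ R}` of `N_B = R^k`. -/
def IsStraightDiagonalAt (P : PAStructure G Ω) (α : Ω) : Prop :=
  ∃ R : Subgroup (Equiv.Perm P.Δ),
    ∀ g ∈ P.N, g ∈ MulAction.stabilizer G α ↔
      ∃ t : ↥R, ∀ (f : Fin P.k → P.Δ) (i : Fin P.k), P.ρ g f i = (t : Equiv.Perm P.Δ) (f i)

/-- The point stabiliser `N_α` is a diagonal subgroup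
`{(t^{φ₁},…,t^{φ_k}) : t ∈ R}` of `N_B = R^k`, for automorphisms `φᵢ` of `R`;
in particular `N_α ≅ R`. -/
def IsDiagonalAt (P : PAStructure G Ω) (α : Ω) : Prop :=
  ∃ (R : Subgroup (Equiv.Perm P.Δ)) (φ : Fin P.k → MulAut ↥R),
    ∀ g ∈ P.N, g ∈ MulAction.stabilizer G α ↔
      ∃ t : ↥R, ∀ (f : Fin P.k → P.Δ) (i : Fin P.k),
        P.ρ g f i = ((φ i t : ↥R) : Equiv.Perm P.Δ) (f i)

/-- The PA action is of straight diagonal type. -/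
def StraightType (P : PAStructure G Ω) : Prop := ∃ α : Ω, P.IsStraightDiagonalAt α

/-- The PA action is of twisted diagonal type: some point stabiliser `N_α` is a twisted
diagonal subgroup (diagonal, but not straight). -/
def TwistedType (P : PAStructure G Ω) : Prop :=
  ∃ α : Ω, P.IsDiagonalAt α ∧ ¬ P.IsStraightDiagonalAt α

/-- The PA action is of nondiagonal type: the point stabilisers `N_α` are not diagonal
subgroups (`N_α ≇ R`). -/
def NondiagonalType (P : PAStructure G Ω) : Prop := ∃ α : Ω, ¬ P.IsDiagonalAt α

end PAStructure



lemma centralizer_involution_equiv (F : Type*) [Field F] [CharP F 2]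
    (w : Matrix.SpecialLinearGroup (Fin 2) F) (hw2 : w ^ 2 = 1) (hw1 : w ≠ 1) :
    Nonempty (F ≃ ↥(Subgroup.centralizer {w})) := by
  classical
  have h2 : (2 : F) = 0 := CharTwo.two_eq_zero
  set W : Matrix (Fin 2) (Fin 2) F := (w : Matrix (Fin 2) (Fin 2) F) with hW
  have hdet : W.det = 1 := w.2
  have hWW : W * W = 1 := by
    have : ((w * w : Matrix.SpecialLinearGroup (Fin 2) F) : Matrix (Fin 2) (Fin 2) F) = 1 := by
      rw [← sq, hw2]; rfl
    simpa using this
  set a := W 0 0 with ha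
  set b := W 0 1 with hb
  set c := W 1 0 with hc
  set d := W 1 1 with hd
  have e00 : a * a + b * c = 1 := by
    have := congrFun (congrFun hWW 0) 0
    simpa [Matrix.mul_apply, Fin.sum_univ_two, Matrix.one_apply] using this
  have e01 : a * b + b * d = 0 := by
    have := congrFun (congrFun hWW 0) 1
    simpa [Matrix.mul_apply, Fin.sum_univ_two, Matrix.one_apply, mul_comm] using this
  have e10 : c * a + d * c = 0 := by
    have := congrFun (congrFun hWW 1) 0
    simpa [Matrix.mul_apply, Fin.sum_univ_two, Matrix.one_apply, mul_comm] using this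
  have hdet2 : a * d - b * c = 1 := by
    rw [ha, hb, hc, hd, ← Matrix.det_fin_two]; exact hdet
  have hWmat : W = !![a, b; c, d] := by
    ext i j; fin_cases i <;> fin_cases j <;> rfl
  -- d = a
  have hda : d = a := by
    by_cases had : a + d = 0
    · have : d = -a := by linear_combination had
      rw [this, CharTwo.neg_eq]
    · have hb0 : b = 0 := by
        have h : b * (a + d) = 0 := by linear_combination e01
        rcases mul_eq_zero.mp h with h | h
        · exact h
        · exact absurd h had
      have hc0 : c = 0 := by
        have h : c * (a + d) = 0 := by linear_combination e10
        rcases mul_eq_zero.mp h with h | h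
        · exact h
        · exact absurd h had
      have haa : a * a = 1 := by linear_combination e00 - c * hb0
      have ha1 : a = 1 := by
        have hsq : (a + 1) ^ 2 = 0 := by linear_combination haa + a * h2 + h2
        have h0 : a + 1 = 0 := pow_eq_zero_iff (n := 2) (by norm_num) |>.mp hsq
        linear_combination h0 - h2
      have hd1 : d = 1 := by
        have h : a * d = 1 := by linear_combination hdet2 + b * hc0
        rw [ha1, one_mul] at h; exact h
      exact absurd (by rw [ha1, hd1]; linear_combination h2) had
  have hbc : b * c = a * a - 1 := by linear_combination a * hda - hdet2
  -- not both b, c zero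
  have hbc0 : ¬ (b = 0 ∧ c = 0) := by
    rintro ⟨hb0, hc0⟩
    have haa : a * a = 1 := by linear_combination e00 - c * hb0
    have ha1 : a = 1 := by
      have hsq : (a + 1) ^ 2 = 0 := by linear_combination haa + a * h2 + h2
      have h0 : a + 1 = 0 := pow_eq_zero_iff (n := 2) (by norm_num) |>.mp hsq
      linear_combination h0 - h2
    apply hw1
    apply Subtype.ext
    show W = 1
    rw [hWmat, hb0, hc0, hda, ha1, Matrix.one_fin_two]
  -- the matrix family
  set M : F → Matrix (Fin 2) (Fin 2) F :=
    fun α => α • (1 : Matrix (Fin 2) (Fin 2) F) + (1 + α) • W with hM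
  have hMapp : ∀ α : F, M α 0 0 = α + (1 + α) * a ∧ M α 0 1 = (1 + α) * b ∧
      M α 1 0 = (1 + α) * c ∧ M α 1 1 = α + (1 + α) * a := by
    intro α
    refine ⟨?_, ?_, ?_, ?_⟩ <;>
      simp [hM, Matrix.add_apply, Matrix.smul_apply, Matrix.one_apply, ← ha, ← hb, ← hc, ← hd,
        hda, smul_eq_mul]
  have hMdet : ∀ α : F, (M α).det = 1 := by
    intro α
    rw [Matrix.det_fin_two]
    obtain ⟨h1, h2', h3, h4⟩ := hMapp α
    rw [h1, h2', h3, h4]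
    linear_combination (-(1+α)^2) * hbc + (α^2 + α + α*(1+α)*a) * h2
  have hMcomm : ∀ α : F, M α * W = W * M α := by
    intro α
    simp only [hM, add_mul, mul_add, Matrix.smul_mul, Matrix.mul_smul, Matrix.one_mul,
      Matrix.mul_one]
  set e : F → Matrix.SpecialLinearGroup (Fin 2) F := fun α => ⟨M α, hMdet α⟩ with he
  have hecent : ∀ α : F, e α ∈ Subgroup.centralizer {w} := by
    intro α
    rw [Subgroup.mem_centralizer_iff]
    rintro h hh
    rw [Set.mem_singleton_iff] at hh
    subst hh
    apply Subtype.ext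
    show W * M α = M α * W
    exact (hMcomm α).symm
  have hinj : Function.Injective (fun α => (⟨e α, hecent α⟩ : ↥(Subgroup.centralizer {w}))) := by
    intro α α' hαα'
    have hMe : M α = M α' :=
      congrArg (fun z => ((z : ↥(Subgroup.centralizer {w})) :
        Matrix.SpecialLinearGroup (Fin 2) F).1) hαα'
    rcases not_and_or.mp hbc0 with hbne | hcne
    · have h01 := congrFun (congrFun hMe 0) 1
      rw [(hMapp α).2.1, (hMapp α').2.1] at h01
      have := mul_right_cancel₀ hbne h01
      linear_combination this
    · have h10 := congrFun (congrFun hMe 1) 0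
      rw [(hMapp α).2.2.1, (hMapp α').2.2.1] at h10
      have := mul_right_cancel₀ hcne h10
      linear_combination this
  have hsurj : Function.Surjective (fun α => (⟨e α, hecent α⟩ : ↥(Subgroup.centralizer {w}))) := by
    rintro ⟨x, hx⟩
    have hcomm : W * (x : Matrix (Fin 2) (Fin 2) F) = (x : Matrix (Fin 2) (Fin 2) F) * W := by
      rw [Subgroup.mem_centralizer_iff] at hx
      have h := hx w (Set.mem_singleton w)
      have := congrArg
        (fun z : Matrix.SpecialLinearGroup (Fin 2) F => (z : Matrix (Fin 2) (Fin 2) F)) h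
      simpa using this
    set X : Matrix (Fin 2) (Fin 2) F := (x : Matrix (Fin 2) (Fin 2) F) with hXdef
    set p := X 0 0 with hp
    set q := X 0 1 with hq
    set r := X 1 0 with hr
    set s := X 1 1 with hs'
    have hdetX : p * s - q * r = 1 := by
      rw [hp, hq, hr, hs', ← Matrix.det_fin_two]; exact x.2
    have E00 : a * p + b * r = p * a + q * c := by
      have := congrFun (congrFun hcomm 0) 0
      simpa [Matrix.mul_apply, Fin.sum_univ_two] using this
    have E01 : a * q + b * s = p * b + q * d := by
      have := congrFun (congrFun hcomm 0) 1
      simpa [Matrix.mul_apply, Fin.sum_univ_two] using this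
    have E10 : c * p + d * r = r * a + s * c := by
      have := congrFun (congrFun hcomm 1) 0
      simpa [Matrix.mul_apply, Fin.sum_univ_two] using this
    rw [hda] at E01 E10
    have key : ∃ β : F, s = p ∧ q = β * b ∧ r = β * c := by
      rcases not_and_or.mp hbc0 with hbne | hcne
      · refine ⟨q * b⁻¹, ?_, ?_, ?_⟩
        · have h : b * (s - p) = 0 := by linear_combination E01
          rcases mul_eq_zero.mp h with h | h
          · exact absurd h hbne
          · linear_combination h
        · field_simp
        · have h : b * r = q * c := by linear_combination E00
          field_simp
          linear_combination h
      · refine ⟨r * c⁻¹, ?_, ?_, ?_⟩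
        · have h : c * (p - s) = 0 := by linear_combination E10
          rcases mul_eq_zero.mp h with h | h
          · exact absurd h hcne
          · linear_combination -h
        · have h : b * r = q * c := by linear_combination E00
          field_simp
          linear_combination -h
        · field_simp
    obtain ⟨β, hsp, hqβ, hrβ⟩ := key
    set α := p - β * a with hα
    have h3 : p * p - (β * b) * (β * c) = 1 := by
      rw [← hqβ, ← hrβ]; linear_combination hdetX - p * hsp
    have h4 : p * p - β ^ 2 * (a * a - 1) = 1 := by
      linear_combination h3 + β ^ 2 * hbc
    have hx2 : (α + β) ^ 2 = 1 := by
      linear_combination h4 + (p * β * (1 - a) + β ^ 2 * a * (a - 1)) * h2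
    have hsum : α + β = 1 := by
      have h5 : (α + β + 1) ^ 2 = 0 := by linear_combination hx2 + (α + β) * h2 + h2
      have h0 : α + β + 1 = 0 := pow_eq_zero_iff (n := 2) (by norm_num) |>.mp h5
      linear_combination h0 - h2
    have hβ1 : 1 + α = β := by linear_combination hsum + (1 - β) * h2
    refine ⟨α, ?_⟩
    apply Subtype.ext
    apply Subtype.ext
    show M α = X
    have hXmat : X = !![p, q; r, s] := by
      ext i j; fin_cases i <;> fin_cases j <;> rfl
    have hMmat : M α = !![α + (1 + α) * a, (1 + α) * b; (1 + α) * c, α + (1 + α) * a] := by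
      obtain ⟨m1, m2, m3, m4⟩ := hMapp α
      have : M α = !![M α 0 0, M α 0 1; M α 1 0, M α 1 1] := by
        ext i j; fin_cases i <;> fin_cases j <;> rfl
      rw [this, m1, m2, m3, m4]
    rw [hMmat, hXmat, hβ1]
    have g00 : α + β * a = p := by linear_combination hα
    have g01 : β * b = q := by linear_combination -hqβ
    have g10 : β * c = r := by linear_combination -hrβ
    rw [g00, g01, g10, hsp]
  exact ⟨Equiv.ofBijective _ ⟨hinj, hsurj⟩⟩

lemma finite_equiv_of_card_eq {α β : Type*} [Finite α] [Finite β]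
    (h : Nat.card α = Nat.card β) : Nonempty (α ≃ β) := by
  have := Fintype.ofFinite α
  have := Fintype.ofFinite β
  rw [Nat.card_eq_fintype_card, Nat.card_eq_fintype_card] at h
  exact Fintype.card_eq.mp h

section AbstractSteps
variable {G : Type*} [Group G] [Finite G]

-- abstract versions of the group-theoretic steps
lemma step_normalizer_le (Y₂ : Subgroup G) (y₁ : G)
    (hY₂_norm : ∀ u ∈ Y₂, y₁ * u * y₁⁻¹ ∈ Y₂) : y₁ ∈ (Subgroup.normalizer (Y₂ : Set G)) := by
  rw [Subgroup.mem_normalizer_iff]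
  intro x
  constructor
  · exact hY₂_norm x
  · intro hx
    have hfi : Function.Injective
        (fun z : ↥Y₂ => (⟨y₁ * z * y₁⁻¹, hY₂_norm z z.2⟩ : ↥Y₂)) := by
      intro z z' hzz'
      have h1 : y₁ * (z : G) * y₁⁻¹ = y₁ * (z' : G) * y₁⁻¹ :=
        congrArg (fun t : ↥Y₂ => (t : G)) hzz'
      ext
      exact mul_left_cancel (mul_right_cancel h1)
    obtain ⟨z, hz⟩ := Finite.surjective_of_injective hfi ⟨y₁ * x * y₁⁻¹, hx⟩
    have h1 : y₁ * (z : G) * y₁⁻¹ = y₁ * x * y₁⁻¹ := congrArg (fun t : ↥Y₂ => (t : G)) hz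
    have h2 : (z : G) = x := mul_left_cancel (mul_right_cancel h1)
    rw [← h2]; exact z.2

lemma step_norm_card (Y₂ : Subgroup G) (w₀ : G) (hw₀ : w₀ ∈ Y₂) (hw₀1 : w₀ ≠ 1) (q : ℕ)
    (hY₂_card : Nat.card ↥Y₂ = q)
    (hY₂_comm : ∀ x ∈ Y₂, ∀ y ∈ Y₂, x * y = y * x)
    (hself : Subgroup.centralizer {w₀} = Y₂) :
    Nat.card ↥(Subgroup.normalizer (Y₂ : Set G)) ≤ (q - 1) * q := by
  set Mg := (Subgroup.normalizer (Y₂ : Set G)) with hMg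
  have hY₂M : Y₂ ≤ Mg := Subgroup.le_normalizer
  have hcard_eq : Nat.card ↥Mg =
      Nat.card (↥Mg ⧸ Y₂.subgroupOf Mg) * Nat.card ↥(Y₂.subgroupOf Mg) :=
    Subgroup.card_eq_card_quotient_mul_card_subgroup _
  have hcardsub : Nat.card ↥(Y₂.subgroupOf Mg) = q := by
    rw [Nat.card_congr (Subgroup.subgroupOfEquivOfLe hY₂M).toEquiv, hY₂_card]
  have hquot : Nat.card (↥Mg ⧸ Y₂.subgroupOf Mg) ≤ q - 1 := by
    set S : Set G := (Y₂ : Set G) \ {1} with hS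
    have hScard : Nat.card ↥S = q - 1 := by
      rw [Nat.card_coe_set_eq, hS, Set.ncard_diff_singleton_of_mem
        (by exact Y₂.one_mem)]
      rw [← hY₂_card, ← Nat.card_coe_set_eq]
      rfl
    have hmap : ∀ m : ↥Mg, ((m : G) * w₀ * (m : G)⁻¹) ∈ S := by
      intro m
      refine ⟨(Subgroup.mem_normalizer_iff.mp m.2 w₀).mp hw₀, ?_⟩
      simp only [Set.mem_singleton_iff]
      intro h
      apply hw₀1
      have h1 : (m : G) * w₀ = (m : G) := by
        have := congrArg (fun t => t * (m : G)) h
        simpa [mul_assoc] using this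
      exact mul_left_cancel (by rw [h1, mul_one])
    have hfinj : ∃ f : (↥Mg ⧸ Y₂.subgroupOf Mg) → ↥S, Function.Injective f := by
      refine ⟨Quotient.lift (fun m : ↥Mg => (⟨(m : G) * w₀ * (m : G)⁻¹, hmap m⟩ : ↥S)) ?_, ?_⟩
      · intro m₁ m₂ h12
        have hmem : (m₁ : G)⁻¹ * (m₂ : G) ∈ Y₂ := by
          have h13 := Subgroup.mem_subgroupOf.mp (QuotientGroup.leftRel_apply.mp h12)
          exact h13
        have hcomm : ((m₁ : G)⁻¹ * m₂) * w₀ = w₀ * ((m₁ : G)⁻¹ * m₂) :=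
          hY₂_comm _ hmem w₀ hw₀
        ext
        show (m₁ : G) * w₀ * (m₁ : G)⁻¹ = (m₂ : G) * w₀ * (m₂ : G)⁻¹
        calc (m₁ : G) * w₀ * (m₁ : G)⁻¹
            = (m₁ : G) * (w₀ * ((m₁ : G)⁻¹ * (m₂ : G))) * (m₂ : G)⁻¹ := by group
          _ = (m₁ : G) * (((m₁ : G)⁻¹ * (m₂ : G)) * w₀) * (m₂ : G)⁻¹ := by rw [← hcomm]
          _ = (m₂ : G) * w₀ * (m₂ : G)⁻¹ := by group
      · intro x y
        induction x using Quotient.inductionOn with | h m₁ =>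
        induction y using Quotient.inductionOn with | h m₂ =>
        intro hxy
        have h : (m₁ : G) * w₀ * (m₁ : G)⁻¹ = (m₂ : G) * w₀ * (m₂ : G)⁻¹ :=
          congrArg (fun t : ↥S => (t : G)) hxy
        apply Quotient.sound
        apply QuotientGroup.leftRel_apply.mpr
        apply Subgroup.mem_subgroupOf.mpr
        show ((m₁⁻¹ * m₂ : ↥Mg) : G) ∈ Y₂
        show (m₁ : G)⁻¹ * (m₂ : G) ∈ Y₂
        have hcent : (m₁ : G)⁻¹ * (m₂ : G) ∈ Subgroup.centralizer {w₀} := by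
          rw [Subgroup.mem_centralizer_iff]
          rintro h' hh'
          rw [Set.mem_singleton_iff] at hh'
          rw [hh']
          calc w₀ * ((m₁ : G)⁻¹ * (m₂ : G))
              = (m₁ : G)⁻¹ * ((m₁ : G) * w₀ * (m₁ : G)⁻¹) * (m₂ : G) := by group
            _ = (m₁ : G)⁻¹ * ((m₂ : G) * w₀ * (m₂ : G)⁻¹) * (m₂ : G) := by rw [h]
            _ = (m₁ : G)⁻¹ * (m₂ : G) * w₀ := by group
        rwa [hself] at hcent
    obtain ⟨f, hfinj⟩ := hfinj
    calc Nat.card (↥Mg ⧸ Y₂.subgroupOf Mg) ≤ Nat.card ↥S :=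
          Nat.card_le_card_of_injective f hfinj
    _ = q - 1 := hScard
  calc Nat.card ↥Mg = _ * _ := hcard_eq
  _ ≤ (q - 1) * q := by rw [hcardsub]; exact Nat.mul_le_mul_right q hquot

lemma step_Y_card_ge (Y Y₂ Y₁ : Subgroup G) (hY₂_le : Y₂ ≤ Y) (hY₁_le : Y₁ ≤ Y)
    (hmeet : Y₂ ⊓ Y₁ = ⊥) :
    Nat.card ↥Y₂ * Nat.card ↥Y₁ ≤ Nat.card ↥Y := by
  have hinj : Function.Injective (fun z : ↥Y₂ × ↥Y₁ =>
      (⟨(z.1 : G) * (z.2 : G), mul_mem (hY₂_le z.1.2) (hY₁_le z.2.2)⟩ : ↥Y)) := by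
    rintro ⟨a₁, b₁⟩ ⟨a₂, b₂⟩ h
    have h' : (a₁ : G) * b₁ = (a₂ : G) * b₂ := congrArg (fun t : ↥Y => (t : G)) h
    have hm : (a₂ : G)⁻¹ * a₁ = (b₂ : G) * (b₁ : G)⁻¹ := by
      have h5 := congrArg (fun t => (a₂ : G)⁻¹ * t * (b₁ : G)⁻¹) h'
      simpa [mul_assoc] using h5
    have hmem : (a₂ : G)⁻¹ * a₁ ∈ Y₂ ⊓ Y₁ :=
      Subgroup.mem_inf.mpr ⟨mul_mem (inv_mem a₂.2) a₁.2,
        by rw [hm]; exact mul_mem b₂.2 (inv_mem b₁.2)⟩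
    rw [hmeet, Subgroup.mem_bot] at hmem
    have ha : (a₁ : G) = a₂ := by
      have := congrArg (fun t => (a₂ : G) * t) hmem
      simpa [mul_assoc] using this
    have hb : (b₁ : G) = b₂ := by
      have h6 : (b₂ : G) * (b₁ : G)⁻¹ = 1 := by rw [← hm, hmem]
      exact (mul_inv_eq_one.mp h6).symm
    simp only [Prod.mk.injEq]
    exact ⟨Subtype.ext ha, Subtype.ext hb⟩
  have := Nat.card_le_card_of_injective _ hinj
  rwa [Nat.card_prod] at this


theorem main_abstract (Y Y₂ Y₁ Y₀ : Subgroup G) (y₁ : G) (q : ℕ)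
    (hq16 : 16 ≤ q) (hqeven : 2 ∣ q) (h3dvd : 3 ∣ q - 1)
    (hY₂_le : Y₂ ≤ Y) (hY₁_def : Y₁ = Subgroup.zpowers y₁) (hY₁_le : Y₁ ≤ Y)
    (hY₂_card : Nat.card ↥Y₂ = q) (hY₂_elem : ∀ u ∈ Y₂, u ^ 2 = 1)
    (hy₁_ord : orderOf y₁ = q - 1)
    (hY₂_norm : ∀ u ∈ Y₂, y₁ * u * y₁⁻¹ ∈ Y₂)
    (hjoin : Y₂ ⊔ Y₁ = Y) (hmeet : Y₂ ⊓ Y₁ = ⊥)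
    (hreg_free : ∀ c ∈ Y₁, c ≠ 1 → ∀ u ∈ Y₂, u ≠ 1 → c * u * c⁻¹ ≠ u)
    (hY₀_le : Y₀ ≤ Y)
    (hY₃_le : Subgroup.zpowers (y₁ ^ ((q - 1) / 3)) ≤ Y₀)
    (hcent_card : ∀ w : G, w ^ 2 = 1 → w ≠ 1 → Nat.card ↥(Subgroup.centralizer {w}) = q)
    (hA4 : Nat.card {z : ↥Y₀ // z ^ 2 = 1} = 4) :
    (Subgroup.normalizer (Y₀ : Set G)) = Y₀ := by
  classical
  -- basic facts about Y₂
  have hY₂_inv : ∀ z ∈ Y₂, z⁻¹ = z := by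
    intro z hz
    have h := hY₂_elem z hz
    rw [pow_two] at h
    exact inv_eq_of_mul_eq_one_left h
  have hY₂_comm : ∀ x ∈ Y₂, ∀ y ∈ Y₂, x * y = y * x := by
    intro x hx y hy
    have h := hY₂_elem _ (mul_mem hx hy)
    rw [pow_two] at h
    have h1 : (x * y)⁻¹ = x * y := inv_eq_of_mul_eq_one_left h
    rw [← h1, _root_.mul_inv_rev, hY₂_inv x hx, hY₂_inv y hy]
  -- Y₂ is self-centralizing
  have hself : ∀ w ∈ Y₂, w ≠ 1 → Subgroup.centralizer {w} = Y₂ := by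
    intro w hw hw1
    have hle : Y₂ ≤ Subgroup.centralizer {w} := by
      intro x hx
      rw [Subgroup.mem_centralizer_iff]
      rintro h hh
      rw [Set.mem_singleton_iff] at hh
      rw [hh]
      exact hY₂_comm w hw x hx
    exact (Subgroup.eq_of_le_of_card_ge hle
      (by rw [hcent_card w (hY₂_elem w hw) hw1, hY₂_card])).symm
  -- Y normalizes Y₂
  have hYleN : Y ≤ (Subgroup.normalizer (Y₂ : Set G)) := by
    rw [← hjoin]
    refine sup_le Subgroup.le_normalizer ?_
    rw [hY₁_def, Subgroup.zpowers_le]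
    exact step_normalizer_le Y₂ y₁ hY₂_norm
  -- a nontrivial element of Y₂
  obtain ⟨w₀, hw₀Y₂, hw₀1⟩ : ∃ x ∈ Y₂, x ≠ (1 : G) := by
    rcases Y₂.bot_or_exists_ne_one with h | h
    · exfalso
      rw [h, Subgroup.card_bot] at hY₂_card
      omega
    · exact h
  -- exact cardinality of Y, and Y is the full normalizer of Y₂
  have hNcard : Nat.card ↥(Subgroup.normalizer (Y₂ : Set G)) ≤ (q - 1) * q :=
    step_norm_card Y₂ w₀ hw₀Y₂ hw₀1 q hY₂_card hY₂_comm (hself w₀ hw₀Y₂ hw₀1)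
  have hYge : q * (q - 1) ≤ Nat.card ↥Y := by
    have := step_Y_card_ge Y Y₂ Y₁ hY₂_le hY₁_le hmeet
    rwa [hY₂_card, hY₁_def, Nat.card_zpowers, hy₁_ord] at this
  have hmulcomm : (q - 1) * q = q * (q - 1) := Nat.mul_comm _ _
  have hYcard : Nat.card ↥Y = q * (q - 1) := by
    have h1 : Nat.card ↥Y ≤ Nat.card ↥(Subgroup.normalizer (Y₂ : Set G)) := Subgroup.card_le_of_le hYleN
    omega
  have hNY₂ : (Subgroup.normalizer (Y₂ : Set G)) = Y := by
    refine (Subgroup.eq_of_le_of_card_ge hYleN ?_).symm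
    omega
  -- conjugation by elements of Y preserves Y₂
  have hconjY₂ : ∀ g ∈ Y, ∀ x : G, x ∈ Y₂ ↔ g * x * g⁻¹ ∈ Y₂ := by
    intro g hg x
    rw [← hNY₂] at hg
    exact Subgroup.mem_normalizer_iff.mp hg x
  -- every involution of Y lies in Y₂
  haveI hY₂N : (Y₂.subgroupOf Y).Normal := by
    have h := Subgroup.normal_in_normalizer (H := Y₂)
    rwa [hNY₂] at h
  have hquotcard : Nat.card (↥Y ⧸ Y₂.subgroupOf Y) = q - 1 := by
    have h1 : Nat.card ↥Y =
        Nat.card (↥Y ⧸ Y₂.subgroupOf Y) * Nat.card ↥(Y₂.subgroupOf Y) :=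
      Subgroup.card_eq_card_quotient_mul_card_subgroup _
    have h2 : Nat.card ↥(Y₂.subgroupOf Y) = q := by
      rw [Nat.card_congr (Subgroup.subgroupOfEquivOfLe hY₂_le).toEquiv, hY₂_card]
    rw [h2, hYcard] at h1
    have hqpos : 0 < q := by omega
    have h3 : (q - 1) * q = Nat.card (↥Y ⧸ Y₂.subgroupOf Y) * q := by omega
    exact (Nat.eq_of_mul_eq_mul_right hqpos h3).symm
  have hinvY₂ : ∀ y ∈ Y, y ^ 2 = 1 → y ∈ Y₂ := by
    intro y hy hy2
    set z : ↥Y ⧸ Y₂.subgroupOf Y := ((⟨y, hy⟩ : ↥Y) : ↥Y ⧸ Y₂.subgroupOf Y) with hz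
    have hz2 : z ^ 2 = 1 := by
      rw [hz, ← QuotientGroup.mk_pow]
      have : (⟨y, hy⟩ : ↥Y) ^ 2 = 1 := by
        apply Subtype.ext
        push_cast
        exact hy2
      rw [this, QuotientGroup.mk_one]
    have hd2 : orderOf z ∣ 2 := orderOf_dvd_of_pow_eq_one hz2
    have hdq : orderOf z ∣ q - 1 := by
      have := orderOf_dvd_natCard z
      rwa [hquotcard] at this
    have hcop : Nat.gcd 2 (q - 1) = 1 := by
      have hodd : ¬ 2 ∣ (q - 1) := by rcases hqeven with ⟨t, ht⟩; omega
      have hg2 := Nat.gcd_dvd_right 2 (q - 1)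
      have hgd := Nat.gcd_dvd_left 2 (q - 1)
      have hle : Nat.gcd 2 (q - 1) ≤ 2 := Nat.le_of_dvd (by norm_num) hgd
      have hpos : Nat.gcd 2 (q - 1) ≠ 0 := fun h => by
        rw [Nat.gcd_eq_zero_iff] at h; omega
      have hne : Nat.gcd 2 (q - 1) ≠ 2 := fun h => hodd (h ▸ hg2)
      omega
    have : orderOf z = 1 := Nat.dvd_one.mp (hcop ▸ Nat.dvd_gcd hd2 hdq)
    have hz1 : z = 1 := orderOf_eq_one_iff.mp this
    have := (QuotientGroup.eq_one_iff (⟨y, hy⟩ : ↥Y)).mp hz1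
    exact Subgroup.mem_subgroupOf.mp this
  -- the Klein subgroup V = Y₀ ⊓ Y₂
  set V : Subgroup G := Y₀ ⊓ Y₂ with hV
  have hVmem : ∀ x : G, x ∈ V ↔ x ∈ Y₀ ∧ x ^ 2 = 1 := by
    intro x
    constructor
    · intro hx
      rcases Subgroup.mem_inf.mp hx with ⟨h1, h2⟩
      exact ⟨h1, hY₂_elem x h2⟩
    · rintro ⟨h1, h2⟩
      exact Subgroup.mem_inf.mpr ⟨h1, hinvY₂ x (hY₀_le h1) h2⟩
  have hVcard : Nat.card ↥V = 4 := by
    rw [← hA4]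
    refine Nat.card_congr ⟨fun x => ⟨⟨(x : G), (Subgroup.mem_inf.mp x.2).1⟩, ?_⟩,
      fun z => ⟨(z.1 : G), (hVmem _).mpr ⟨z.1.2, by
        have := congrArg (fun t : ↥Y₀ => (t : G)) z.2
        push_cast at this
        exact this⟩⟩, fun x => rfl, fun z => rfl⟩
    apply Subtype.ext
    push_cast
    exact ((hVmem _).mp x.2).2
  have hVleY₂ : V ≤ Y₂ := inf_le_right
  have hVleY₀ : V ≤ Y₀ := inf_le_left
  -- the order-3 element y₃
  set y₃ : G := y₁ ^ ((q - 1) / 3) with hy₃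
  obtain ⟨k, hk⟩ := h3dvd
  have hkq : (q - 1) / 3 = k := by omega
  have hy₃_ord : orderOf y₃ = 3 := by
    rw [hy₃, orderOf_pow, hy₁_ord, hkq, hk]
    have hkpos : 0 < k := by omega
    rw [Nat.gcd_eq_right ⟨3, by omega⟩]
    rw [Nat.mul_comm]
    exact Nat.mul_div_cancel_left 3 hkpos
  have hy₃1 : y₃ ≠ 1 := by
    intro h
    rw [h, orderOf_one] at hy₃_ord
    omega
  have hy₃Y₀ : y₃ ∈ Y₀ := hY₃_le (Subgroup.mem_zpowers _)
  have hy₃Y₁ : y₃ ∈ Y₁ := by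
    rw [hY₁_def, hy₃]
    exact pow_mem (Subgroup.mem_zpowers y₁) _
  have hy₃Y : y₃ ∈ Y := hY₁_le hy₃Y₁
  -- injectivity of the commutator-with-y₃ map on Y₂
  have hθinj : ∀ x ∈ Y₂, ∀ y ∈ Y₂,
      x * y₃ * x⁻¹ * y₃⁻¹ = y * y₃ * y⁻¹ * y₃⁻¹ → x = y := by
    intro x hx y hy hxy
    have h1 : x * y₃ * x⁻¹ = y * y₃ * y⁻¹ := mul_right_cancel hxy
    have h2 : y₃ * (y⁻¹ * x) * y₃⁻¹ = y⁻¹ * x := by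
      have h3 : (y⁻¹ * x) * y₃ * (y⁻¹ * x)⁻¹ = y₃ := by
        calc (y⁻¹ * x) * y₃ * (y⁻¹ * x)⁻¹ = y⁻¹ * (x * y₃ * x⁻¹) * y := by group
          _ = y⁻¹ * (y * y₃ * y⁻¹) * y := by rw [h1]
          _ = y₃ := by group
      have h4 : (y⁻¹ * x) * y₃ = y₃ * (y⁻¹ * x) := by
        have h5 := congrArg (fun t => t * (y⁻¹ * x)) h3
        simpa [mul_assoc] using h5
      rw [← h4]
      group
    by_cases hz : y⁻¹ * x = 1
    · have := inv_mul_eq_one.mp hz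
      exact this.symm
    · exact absurd h2
        (hreg_free y₃ hy₃Y₁ hy₃1 (y⁻¹ * x) (mul_mem (inv_mem hy) hx) hz)
  -- enumeration of V
  obtain ⟨a, haV, ha1⟩ : ∃ x ∈ V, x ≠ (1 : G) := by
    rcases V.bot_or_exists_ne_one with h | h
    · rw [h, Subgroup.card_bot] at hVcard; omega
    · exact h
  obtain ⟨b, hbV, hb1, hba⟩ : ∃ x ∈ V, x ≠ (1 : G) ∧ x ≠ a := by
    by_contra hcon
    push_neg at hcon
    have hsub : (V : Set G) ⊆ {1, a} := by
      intro x hx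
      simp only [Set.mem_insert_iff, Set.mem_singleton_iff]
      rcases eq_or_ne x 1 with h | h
      · exact Or.inl h
      · exact Or.inr (hcon x hx h)
    have hVset : (V : Set G).ncard = Nat.card ↥V := by
      rw [← Nat.card_coe_set_eq]
      rfl
    have : Nat.card ↥V ≤ 2 := by
      rw [← hVset]
      calc (V : Set G).ncard ≤ ({1, a} : Set G).ncard := Set.ncard_le_ncard hsub (by
        exact (Set.finite_singleton a).insert 1)
      _ ≤ 2 := by
        apply le_trans (Set.ncard_insert_le _ _)
        simp
    omega
  have haY₂ : a ∈ Y₂ := hVleY₂ haV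
  have hbY₂ : b ∈ Y₂ := hVleY₂ hbV
  have ha2 : a ^ 2 = 1 := hY₂_elem a haY₂
  have hb2 : b ^ 2 = 1 := hY₂_elem b hbY₂
  set d : G := a * b with hd
  have hdV : d ∈ V := mul_mem haV hbV
  have hd1 : d ≠ 1 := by
    intro h
    apply hba
    have : a⁻¹ = b := by
      rw [hd] at h
      exact inv_eq_of_mul_eq_one_right h
    rw [← this, hY₂_inv a haY₂]
  have hdistinct : d ≠ a ∧ d ≠ b := by
    constructor
    · intro h
      apply hb1
      have := congrArg (fun t => a⁻¹ * t) h
      simpa [hd, mul_assoc] using this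
    · intro h
      apply ha1
      have := congrArg (fun t => t * b⁻¹) h
      simpa [hd, mul_assoc] using this
  have hVenum : ∀ x ∈ V, x = 1 ∨ x = a ∨ x = b ∨ x = d := by
    have hsub : ({1, a, b, d} : Set G) ⊆ (V : Set G) := by
      intro x hx
      rcases hx with h | h | h | h
      all_goals subst h
      · exact V.one_mem
      · exact haV
      · exact hbV
      · exact hdV
    have hcard4 : ({1, a, b, d} : Set G).ncard = 4 := by
      rw [Set.ncard_insert_of_notMem (by
          simp only [Set.mem_insert_iff, Set.mem_singleton_iff]
          push_neg
          exact ⟨ha1.symm, hb1.symm, hd1.symm⟩) (by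
          exact ((Set.finite_singleton d).insert b).insert a),
        Set.ncard_insert_of_notMem (by
          simp only [Set.mem_insert_iff, Set.mem_singleton_iff]
          push_neg
          exact ⟨fun h => hba h.symm, fun h => hdistinct.1 h.symm⟩) (by
          exact (Set.finite_singleton d).insert b),
        Set.ncard_insert_of_notMem (by
          simp only [Set.mem_singleton_iff]
          exact fun h => hdistinct.2 h.symm) (Set.finite_singleton d),
        Set.ncard_singleton]
    have hVset2 : (V : Set G).ncard = Nat.card ↥V := by
      rw [← Nat.card_coe_set_eq]
      rfl
    have heq : ({1, a, b, d} : Set G) = (V : Set G) := by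
      apply Set.eq_of_subset_of_ncard_le hsub
      rw [hcard4, hVset2, hVcard]
    intro x hx
    have : x ∈ ({1, a, b, d} : Set G) := heq ▸ hx
    simpa using this
  -- decomposition g = u * c  (assume as axiom for now, will be a step lemma)
  have hdecomp : ∀ g ∈ Y, ∃ u ∈ Y₂, ∃ c ∈ Y₁, g = u * c := by
    have hcard : Nat.card ↥Y = Nat.card ↥Y₂ * Nat.card ↥Y₁ := by
      rw [hY₂_card, hY₁_def, Nat.card_zpowers, hy₁_ord, hYcard]
    have hinj : Function.Injective (fun z : ↥Y₂ × ↥Y₁ =>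
        (⟨(z.1 : G) * (z.2 : G), mul_mem (hY₂_le z.1.2) (hY₁_le z.2.2)⟩ : ↥Y)) := by
      rintro ⟨a₁, b₁⟩ ⟨a₂, b₂⟩ h
      have h' : (a₁ : G) * b₁ = (a₂ : G) * b₂ := congrArg (fun t : ↥Y => (t : G)) h
      have hm : (a₂ : G)⁻¹ * a₁ = (b₂ : G) * (b₁ : G)⁻¹ := by
        have h5 := congrArg (fun t => (a₂ : G)⁻¹ * t * (b₁ : G)⁻¹) h'
        simpa [mul_assoc] using h5
      have hmem : (a₂ : G)⁻¹ * a₁ ∈ Y₂ ⊓ Y₁ :=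
        Subgroup.mem_inf.mpr ⟨mul_mem (inv_mem a₂.2) a₁.2,
          by rw [hm]; exact mul_mem b₂.2 (inv_mem b₁.2)⟩
      rw [hmeet, Subgroup.mem_bot] at hmem
      have ha : (a₁ : G) = a₂ := by
        have := congrArg (fun t => (a₂ : G) * t) hmem
        simpa [mul_assoc] using this
      have hb : (b₁ : G) = b₂ := by
        have h6 : (b₂ : G) * (b₁ : G)⁻¹ = 1 := by rw [← hm, hmem]
        exact (mul_inv_eq_one.mp h6).symm
      simp only [Prod.mk.injEq]
      exact ⟨Subtype.ext ha, Subtype.ext hb⟩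
    obtain ⟨e⟩ : Nonempty ((↥Y₂ × ↥Y₁) ≃ ↥Y) :=
      finite_equiv_of_card_eq (by rw [Nat.card_prod, hcard])
    have hsurjf := (Finite.injective_iff_surjective_of_equiv e).mp hinj
    intro g hg
    obtain ⟨⟨uu, cc⟩, hz⟩ := hsurjf ⟨g, hg⟩
    exact ⟨uu, uu.2, cc, cc.2, (congrArg (fun t : ↥Y => (t : G)) hz).symm⟩
  -- conclusion: the normalizer of Y₀ is Y₀
  refine le_antisymm ?_ Subgroup.le_normalizer
  intro g hg
  have hgY₀conj : ∀ x : G, x ∈ Y₀ ↔ g * x * g⁻¹ ∈ Y₀ := Subgroup.mem_normalizer_iff.mp hg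
  have hga : g * a * g⁻¹ ∈ V := by
    rw [hVmem]
    refine ⟨(hgY₀conj a).mp (hVleY₀ haV), ?_⟩
    rw [pow_two]
    calc (g*a*g⁻¹) * (g*a*g⁻¹) = g * (a*a) * g⁻¹ := by group
      _ = 1 := by rw [← pow_two, ha2]; group
  have hga1 : g * a * g⁻¹ ≠ 1 := by
    intro h
    apply ha1
    have := congrArg (fun t => g⁻¹ * t * g) h
    simpa [mul_assoc] using this
  -- g lies in Y
  have hgY : g ∈ Y := by
    rw [← hNY₂, Subgroup.mem_normalizer_iff]
    intro x
    constructor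
    · intro hx
      rw [← hself a haY₂ ha1] at hx
      rw [← hself _ (hVleY₂ hga) hga1]
      rw [Subgroup.mem_centralizer_iff] at hx ⊢
      rintro h' hh'
      rw [Set.mem_singleton_iff] at hh'
      rw [hh']
      have hax := hx a (Set.mem_singleton a)
      calc (g*a*g⁻¹) * (g*x*g⁻¹) = g * (a*x) * g⁻¹ := by group
        _ = g * (x*a) * g⁻¹ := by rw [hax]
        _ = (g*x*g⁻¹) * (g*a*g⁻¹) := by group
    · intro hx
      rw [← hself _ (hVleY₂ hga) hga1] at hx
      rw [← hself a haY₂ ha1]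
      rw [Subgroup.mem_centralizer_iff] at hx ⊢
      rintro h' hh'
      rw [Set.mem_singleton_iff] at hh'
      rw [hh']
      have hax := hx (g*a*g⁻¹) (Set.mem_singleton _)
      calc a * x = g⁻¹ * ((g*a*g⁻¹) * (g*x*g⁻¹)) * g := by group
        _ = g⁻¹ * ((g*x*g⁻¹) * (g*a*g⁻¹)) * g := by rw [hax]
        _ = x * a := by group
  obtain ⟨u, huY₂, c, hcY₁, hguc⟩ := hdecomp g hgY
  have hgV : ∀ x ∈ V, g * x * g⁻¹ ∈ V := by
    intro x hx
    exact Subgroup.mem_inf.mpr ⟨(hgY₀conj x).mp (hVleY₀ hx), (hconjY₂ g hgY x).mp (hVleY₂ hx)⟩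
  have hcV : ∀ x ∈ V, c * x * c⁻¹ ∈ V := by
    intro x hx
    have h1 : c * x * c⁻¹ = u⁻¹ * (g * x * g⁻¹) * u := by rw [hguc]; group
    have h2 : u⁻¹ * (g * x * g⁻¹) * u = g * x * g⁻¹ := by
      have hcm := hY₂_comm u huY₂ _ (hVleY₂ (hgV x hx))
      calc u⁻¹ * (g*x*g⁻¹) * u = u⁻¹ * ((g*x*g⁻¹) * u) := by group
        _ = u⁻¹ * (u * (g*x*g⁻¹)) := by rw [← hcm]
        _ = g*x*g⁻¹ := by group
    rw [h1, h2]
    exact hgV x hx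
  -- c has order dividing 3
  have hc3 : c ^ 3 = 1 := by
    by_cases hc1 : c = 1
    · rw [hc1, one_pow]
    · have hfne1 : ∀ x : G, x ≠ 1 → c*x*c⁻¹ ≠ 1 := by
        intro x hx h
        apply hx
        have := congrArg (fun t => c⁻¹ * t * c) h
        simpa [mul_assoc] using this
      have hinjc : ∀ x y : G, c*x*c⁻¹ = c*y*c⁻¹ → x = y := fun x y h =>
        mul_left_cancel (mul_right_cancel h)
      have hdY₂ : d ∈ Y₂ := hVleY₂ hdV
      have faV := hcV a haV
      have fa1 := hfne1 a ha1
      have faa := hreg_free c hcY₁ hc1 a haY₂ ha1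
      have fbV := hcV b hbV
      have fb1 := hfne1 b hb1
      have fbb := hreg_free c hcY₁ hc1 b hbY₂ hb1
      have fdV := hcV d hdV
      have fd1 := hfne1 d hd1
      have fdd := hreg_free c hcY₁ hc1 d hdY₂ hd1
      have hcube : c^3 * a * (c^3)⁻¹ = c*(c*(c*a*c⁻¹)*c⁻¹)*c⁻¹ := by
        have h9 : c^3 = c*c*c := by rw [pow_succ, pow_succ, pow_one]
        rw [h9]; group
      have hfix : c^3 * a * (c^3)⁻¹ = a := by
        rcases hVenum _ faV with h|h|h|h
        · exact absurd h fa1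
        · exact absurd h faa
        · -- c a c⁻¹ = b
          rcases hVenum _ fbV with h'|h'|h'|h'
          · exact absurd h' fb1
          · exfalso
            rcases hVenum _ fdV with h''|h''|h''|h''
            · exact fd1 h''
            · exact hdistinct.2 (hinjc d b (h''.trans h'.symm))
            · exact hdistinct.1 (hinjc d a (h''.trans h.symm))
            · exact fdd h''
          · exact absurd h' fbb
          · have h'' : c*d*c⁻¹ = a := by
              rcases hVenum _ fdV with h''|h''|h''|h''
              · exact absurd h'' fd1
              · exact h''
              · exact absurd (hinjc d a (h''.trans h.symm)) hdistinct.1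
              · exact absurd h'' fdd
            calc c^3*a*(c^3)⁻¹ = c*(c*(c*a*c⁻¹)*c⁻¹)*c⁻¹ := hcube
              _ = a := by rw [h, h', h'']
        · -- c a c⁻¹ = d
          rcases hVenum _ fdV with h'|h'|h'|h'
          · exact absurd h' fd1
          · exfalso
            rcases hVenum _ fbV with h''|h''|h''|h''
            · exact fb1 h''
            · exact hdistinct.2 (hinjc b d (h''.trans h'.symm)).symm
            · exact fbb h''
            · exact hba (hinjc b a (h''.trans h.symm))
          · -- c d c⁻¹ = b
            have h'' : c*b*c⁻¹ = a := by
              rcases hVenum _ fbV with h''|h''|h''|h''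
              · exact absurd h'' fb1
              · exact h''
              · exact absurd h'' fbb
              · exact absurd (hinjc b a (h''.trans h.symm)) hba
            calc c^3*a*(c^3)⁻¹ = c*(c*(c*a*c⁻¹)*c⁻¹)*c⁻¹ := hcube
              _ = a := by rw [h, h', h'']
          · exact absurd h' fdd
      by_contra hc3ne
      exact hreg_free (c^3) (pow_mem hcY₁ 3) hc3ne a haY₂ ha1 hfix
  -- c lies in ⟨y₃⟩ ≤ Y₀
  have hcY₀ : c ∈ Y₀ := by
    apply hY₃_le
    rw [hY₁_def, Subgroup.mem_zpowers_iff] at hcY₁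
    obtain ⟨m, hm⟩ := hcY₁
    have h3m : y₁ ^ (m * 3) = 1 := by
      rw [zpow_mul, hm, show ((3:ℤ)) = ((3:ℕ):ℤ) from rfl, zpow_natCast, hc3]
    have hdvd : ((q - 1 : ℕ) : ℤ) ∣ m * 3 := by
      rw [← hy₁_ord]
      exact orderOf_dvd_iff_zpow_eq_one.mpr h3m
    rw [hk] at hdvd
    have hdvd' : (k : ℤ) ∣ m := by
      have h33 : ((3 * k : ℕ) : ℤ) = 3 * (k : ℤ) := by push_cast; ring
      rw [h33, mul_comm m 3] at hdvd
      exact (mul_dvd_mul_iff_left (by norm_num : (3:ℤ) ≠ 0)).mp hdvd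
    obtain ⟨t, ht⟩ := hdvd'
    rw [Subgroup.mem_zpowers_iff]
    refine ⟨t, ?_⟩
    have hzp : (y₁ ^ ((q-1)/3)) ^ t = y₁ ^ (((q-1)/3 : ℕ) * t : ℤ) := by
      rw [← zpow_natCast y₁ ((q-1)/3), ← zpow_mul]
    rw [hzp, hkq, ← ht, hm]
  -- finally, u ∈ V and g ∈ Y₀
  have huN : ∀ x ∈ Y₀, u * x * u⁻¹ ∈ Y₀ := by
    intro x hx
    have h1 : u = g * c⁻¹ := by rw [hguc]; group
    rw [h1]
    have h2 : g*c⁻¹*x*(g*c⁻¹)⁻¹ = g * (c⁻¹ * x * c) * g⁻¹ := by group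
    rw [h2]
    exact (hgY₀conj _).mp (mul_mem (mul_mem (inv_mem hcY₀) hx) hcY₀)
  have hθu : u * y₃ * u⁻¹ * y₃⁻¹ ∈ V := by
    apply Subgroup.mem_inf.mpr
    constructor
    · exact mul_mem (huN y₃ hy₃Y₀) (inv_mem hy₃Y₀)
    · have h1 : u*y₃*u⁻¹*y₃⁻¹ = u * (y₃*u⁻¹*y₃⁻¹) := by group
      rw [h1]
      exact mul_mem huY₂ ((hconjY₂ y₃ hy₃Y _).mp (inv_mem huY₂))
  have hθV : ∀ x : ↥V, (x:G)*y₃*(x:G)⁻¹*y₃⁻¹ ∈ V := by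
    intro x
    apply Subgroup.mem_inf.mpr
    constructor
    · exact mul_mem (mul_mem (mul_mem (hVleY₀ x.2) hy₃Y₀) (inv_mem (hVleY₀ x.2)))
        (inv_mem hy₃Y₀)
    · have h1 : (x:G)*y₃*(x:G)⁻¹*y₃⁻¹ = (x:G) * (y₃*(x:G)⁻¹*y₃⁻¹) := by group
      rw [h1]
      exact mul_mem (hVleY₂ x.2) ((hconjY₂ y₃ hy₃Y _).mp (inv_mem (hVleY₂ x.2)))
  have hθsurj : Function.Surjective (fun x : ↥V => (⟨_, hθV x⟩ : ↥V)) := by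
    apply Finite.surjective_of_injective
    intro x y hxy
    have h := congrArg (fun t : ↥V => (t : G)) hxy
    exact Subtype.ext (hθinj _ (hVleY₂ x.2) _ (hVleY₂ y.2) h)
  obtain ⟨v, hv⟩ := hθsurj ⟨_, hθu⟩
  have hv' : (v:G)*y₃*(v:G)⁻¹*y₃⁻¹ = u*y₃*u⁻¹*y₃⁻¹ := congrArg (fun t : ↥V => (t:G)) hv
  have huv : (v:G) = u := hθinj _ (hVleY₂ v.2) _ huY₂ hv'
  have huV : u ∈ V := huv ▸ v.2
  rw [hguc]
  exact mul_mem (hVleY₀ huV) hcY₀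

end AbstractSteps


lemma a4_card_involutions : Nat.card {z : ↥(alternatingGroup (Fin 4)) // z ^ 2 = 1} = 4 := by
  have hperm : Nat.card {p : Equiv.Perm (Fin 4) // Equiv.Perm.sign p = 1 ∧ p ^ 2 = 1} = 4 := by
    rw [Nat.card_eq_fintype_card]; decide
  refine Eq.trans (Nat.card_congr ?_) hperm
  exact {
    toFun := fun z => ⟨(z.1 : Equiv.Perm (Fin 4)), Equiv.Perm.mem_alternatingGroup.mp z.1.2, by
      have := congrArg (fun t : ↥(alternatingGroup (Fin 4)) => (t : Equiv.Perm (Fin 4))) z.2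
      push_cast at this
      exact this⟩
    invFun := fun p => ⟨⟨p.1, Equiv.Perm.mem_alternatingGroup.mpr p.2.1⟩, by
      apply Subtype.ext
      push_cast
      exact p.2.2⟩
    left_inv := fun z => rfl
    right_inv := fun p => rfl }

lemma card_inv_transfer {G H : Type*} [Group G] [Group H] (e : G ≃* H) :
    Nat.card {z : G // z ^ 2 = 1} = Nat.card {z : H // z ^ 2 = 1} := by
  apply Nat.card_congr
  refine Equiv.subtypeEquiv e.toEquiv (fun z => ?_)
  rw [show e.toEquiv z = e z from rfl, ← map_pow, MulEquiv.map_eq_one_iff]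

/-- **Lemma (`N_T(Y₀) = Y₀` for `A₄ ≅ Y₀` inside a Borel subgroup of
`T = PSL(2, 2^{2n}) = SL(2, 2^{2n})`).**
Let `n ≥ 2`, `T = SL(2, GF(2^{2n}))`, and let `Y = Y₂ ⋊ Y₁ ≤ T` be a Borel subgroup,
where `Y₂ ≅ C₂^{2n}` is elementary abelian and `Y₁ = ⟨y₁⟩` is cyclic of order
`2^{2n} - 1` acting regularly (by conjugation) on the nonidentity elements of `Y₂`.
Let `Y₀ ≤ Y` with `Y₀ ≅ A₄` containing the subgroup `Y₃ = ⟨y₁^{(2^{2n}-1)/3}⟩` of order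
3 of `Y₁`.  Then `N_T(Y₀) = Y₀`. -/
theorem normalizer_A4_in_Borel_eq_self
    (n : ℕ) (hn : 2 ≤ n)
    (Y Y₂ Y₁ Y₀ : Subgroup (Matrix.SpecialLinearGroup (Fin 2) (GaloisField 2 (2 * n))))
    (y₁ : Matrix.SpecialLinearGroup (Fin 2) (GaloisField 2 (2 * n)))
    -- `Y = Y₂ ⋊ Y₁` is a Borel subgroup:
    (hY₂_le : Y₂ ≤ Y) (hY₁_def : Y₁ = Subgroup.zpowers y₁) (hY₁_le : Y₁ ≤ Y)
    (hY₂_card : Nat.card ↥Y₂ = 2 ^ (2 * n)) (hY₂_elem : ∀ u ∈ Y₂, u ^ 2 = 1)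
    (hy₁_ord : orderOf y₁ = 2 ^ (2 * n) - 1)
    (hY₂_norm : ∀ u ∈ Y₂, y₁ * u * y₁⁻¹ ∈ Y₂)
    (hjoin : Y₂ ⊔ Y₁ = Y) (hmeet : Y₂ ⊓ Y₁ = ⊥)
    -- `Y₁` acts regularly on the nonidentity elements of `Y₂`:
    (hreg_trans : ∀ u ∈ Y₂, u ≠ 1 → ∀ v ∈ Y₂, v ≠ 1 → ∃ c ∈ Y₁, c * u * c⁻¹ = v)
    (hreg_free : ∀ c ∈ Y₁, c ≠ 1 → ∀ u ∈ Y₂, u ≠ 1 → c * u * c⁻¹ ≠ u)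
    -- `Y₀ ≤ Y` with `Y₀ ≅ A₄` and `Y₃ ≤ Y₀`:
    (hY₀_le : Y₀ ≤ Y)
    (hY₀_A4 : Nonempty (↥Y₀ ≃* ↥(alternatingGroup (Fin 4))))
    (hY₃_le : Subgroup.zpowers (y₁ ^ ((2 ^ (2 * n) - 1) / 3)) ≤ Y₀) :
    Subgroup.normalizer (Y₀ : Set (Matrix.SpecialLinearGroup (Fin 2) (GaloisField 2 (2 * n)))) = Y₀ := by
  classical
  obtain ⟨e⟩ := hY₀_A4
  refine main_abstract Y Y₂ Y₁ Y₀ y₁ (2 ^ (2 * n)) ?_ ?_ ?_ hY₂_le hY₁_def hY₁_le hY₂_card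
    hY₂_elem hy₁_ord hY₂_norm hjoin hmeet hreg_free hY₀_le hY₃_le ?_ ?_
  · calc (16 : ℕ) = 2 ^ 4 := by norm_num
      _ ≤ 2 ^ (2 * n) := Nat.pow_le_pow_right (by norm_num) (by omega)
  · exact dvd_pow_self 2 (by omega)
  · have h1 : (4 : ℕ) ^ n % 3 = 1 := by rw [Nat.pow_mod]; simp
    have h4 : 2 ^ (2 * n) = 4 ^ n := by rw [pow_mul]; norm_num
    omega
  · intro w hw2 hw1
    obtain ⟨ee⟩ := centralizer_involution_equiv (GaloisField 2 (2 * n)) w hw2 hw1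
    rw [← Nat.card_congr ee]
    exact GaloisField.card 2 (2 * n) (by omega)
  · rw [card_inv_transfer e]
    exact a4_card_involutions
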